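/- Let A be an n×n quaternion matrix, let k ≥ 1 be an integer, let D be a Drazin inverse of A with index k, and let Y be a Moore–Penrose inverse of A^{k+1}. Then the matrix T := A^k·Y satisfies T·A·T = T, (A·T)* = A·T, T·A^{k+1} = A^k, and R_r(T) = R_r(D); that is, A^k (A^{k+1})† is the right core-EP inverse of A. -/
import Mathlib


/-- `A^k·(A^{k+1})†` is the right core-EP inverse of a quaternion matrix `A`:
with `D` the Drazin inverse of `A` of index `k` and `Y` a Moore–Penrose inverse
of `A^{k+1}`, the matrix `T = A^k·Y` satisfies `T·A·T = T`, `(A·T)* = A·T`,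
`T·A^{k+1} = A^k`, and `R_r(T) = R_r(D)`. -/
theorem right_core_EP_inverse {n : ℕ} (k : ℕ) (hk : 1 ≤ k)
    (A D Y : Matrix (Fin n) (Fin n) (Quaternion ℝ))
    (hD1 : A * D = D * A) (hD2 : D * A * D = D) (hD3 : D * A ^ (k + 1) = A ^ k)
    (hY1 : A ^ (k + 1) * Y * A ^ (k + 1) = A ^ (k + 1))
    (hY2 : Y * A ^ (k + 1) * Y = Y)
    (hY3 : (A ^ (k + 1) * Y).conjTranspose = A ^ (k + 1) * Y)
    (hY4 : (Y * A ^ (k + 1)).conjTranspose = Y * A ^ (k + 1)) :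
    (A ^ k * Y) * A * (A ^ k * Y) = A ^ k * Y ∧
    (A * (A ^ k * Y)).conjTranspose = A * (A ^ k * Y) ∧
    (A ^ k * Y) * A ^ (k + 1) = A ^ k ∧
    {y : Fin n → Quaternion ℝ | ∃ x, (A ^ k * Y).mulVec x = y} =
      {y : Fin n → Quaternion ℝ | ∃ x, D.mulVec x = y} := by
  have hc : Commute A D := hD1
  have h2 : D * D * A = D := by rw [mul_assoc, ← hD1, ← mul_assoc, hD2]
  -- D^(m+1) * A^m = D for all m
  have hDm : ∀ m : ℕ, D ^ (m + 1) * A ^ m = D := by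
    intro m
    induction m with
    | zero => simp
    | succ m ih =>
      calc D ^ (m + 1 + 1) * A ^ (m + 1)
          = D ^ m * (D * D * A) * A ^ m := by
            rw [pow_succ D (m + 1), pow_succ D m, pow_succ' A m]
            simp only [mul_assoc]
        _ = D ^ (m + 1) * A ^ m := by rw [h2, pow_succ]
        _ = D := ih
  have hT3 : (A ^ k * Y) * A ^ (k + 1) = A ^ k := by
    calc (A ^ k * Y) * A ^ (k + 1)
        = D * (A ^ (k + 1) * Y * A ^ (k + 1)) := by
          rw [← hD3]; simp only [mul_assoc]
      _ = D * A ^ (k + 1) := by rw [hY1]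
      _ = A ^ k := hD3
  have hT1 : (A ^ k * Y) * A * (A ^ k * Y) = A ^ k * Y := by
    calc (A ^ k * Y) * A * (A ^ k * Y)
        = A ^ k * (Y * A ^ (k + 1) * Y) := by
          rw [pow_succ' A k]; simp only [mul_assoc]
      _ = A ^ k * Y := by rw [hY2]
  have hA : A * (A ^ k * Y) = A ^ (k + 1) * Y := by rw [← mul_assoc, ← pow_succ']
  have hcomm : A ^ k * D ^ (k + 1) = D ^ (k + 1) * A ^ k :=
    ((hc.symm.pow_pow (k + 1) k)).eq.symm
  refine ⟨hT1, by rw [hA]; exact hY3, hT3, ?_⟩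
  ext y
  simp only [Set.mem_setOf_eq]
  constructor
  · rintro ⟨x, rfl⟩
    refine ⟨(A ^ (k + 1) * Y).mulVec x, ?_⟩
    rw [Matrix.mulVec_mulVec, ← mul_assoc, hD3]
  · rintro ⟨x, rfl⟩
    refine ⟨(A ^ (k + 1) * D ^ (k + 1)).mulVec x, ?_⟩
    rw [Matrix.mulVec_mulVec]
    have key : (A ^ k * Y) * (A ^ (k + 1) * D ^ (k + 1)) = D := calc (A ^ k * Y) * (A ^ (k + 1) * D ^ (k + 1))
        = ((A ^ k * Y) * A ^ (k + 1)) * D ^ (k + 1) := (mul_assoc _ _ _).symm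
      _ = A ^ k * D ^ (k + 1) := by rw [hT3]
      _ = D ^ (k + 1) * A ^ k := hcomm
      _ = D := hDm k
    rw [key]
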